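/- (Chain rule from the Leibniz rule.) Let F be an algebra of real-valued functions on an interval J, stable under composition with C² functions, and let D : F → F be a linear operator satisfying the Leibniz rule D(uv) = (Du)v + u(Dv) pointwise. Fix x₀ ∈ J and w ∈ F with w continuous at x₀. Suppose f ∈ C²(ℝ) and suppose the constant functions and the functions x ↦ f(w(x)), x ↦ w(x), and x ↦ g₂(w(x))(w(x) - w(x₀))² all lie in F, where g₂(t) = ∫₀¹(1-s)f''(w(x₀) + s(t - w(x₀)))ds, with g₂∘w and (w - w(x₀)) each in F. Then D(f∘w)(x₀) = f'(w(x₀)) · (Dw)(x₀). -/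

import Mathlib

open intervalIntegral

lemma taylor2_integral (f : ℝ → ℝ) (hf : ContDiff ℝ 2 f) (a b : ℝ) :
    f b = f a + deriv f a * (b - a) +
      (∫ s in (0:ℝ)..1, (1 - s) * deriv (deriv f) (a + s * (b - a))) * (b - a) ^ 2 := by
  have hf' : ContDiff ℝ ((1:ℕ∞) + 1) f := by exact_mod_cast hf
  have hf1 : ContDiff ℝ 1 (deriv f) := by exact_mod_cast (contDiff_succ_iff_deriv.mp hf').2.2
  have hdf : Differentiable ℝ f := (contDiff_succ_iff_deriv.mp hf').1
  have hdf1 : Differentiable ℝ (deriv f) := hf1.differentiable one_ne_zero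
  have hcf2 : Continuous (deriv (deriv f)) := hf1.continuous_deriv le_rfl
  set c := b - a with hc
  have hlin : ∀ s : ℝ, HasDerivAt (fun s : ℝ => a + s * c) c s := fun s =>
    by simpa using ((hasDerivAt_id s).mul_const c).const_add a
  have hv : ∀ s : ℝ, HasDerivAt (fun s => deriv f (a + s * c) * c)
      (deriv (deriv f) (a + s * c) * c * c) s := by
    intro s
    exact (((hdf1 (a + s * c)).hasDerivAt.comp s (hlin s)).mul_const c)
  have hg : ∀ s : ℝ, HasDerivAt (fun s => f (a + s * c)) (deriv f (a + s * c) * c) s := fun s =>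
    ((hdf (a + s * c)).hasDerivAt.comp s (hlin s))
  have hint1 : IntervalIntegrable (fun s => deriv f (a + s * c) * c) MeasureTheory.volume 0 1 :=
    (((hdf1.continuous.comp (by continuity)).mul continuous_const)).intervalIntegrable 0 1
  have hint2 : IntervalIntegrable (fun s : ℝ => deriv (deriv f) (a + s * c) * c * c)
      MeasureTheory.volume 0 1 :=
    (((hcf2.comp (by continuity)).mul continuous_const).mul continuous_const).intervalIntegrable 0 1
  have hparts := integral_mul_deriv_eq_deriv_mul
    (u := fun s : ℝ => 1 - s) (u' := fun _ => (-1 : ℝ))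
    (v := fun s => deriv f (a + s * c) * c)
    (v' := fun s => deriv (deriv f) (a + s * c) * c * c)
    (a := (0:ℝ)) (b := 1)
    (fun s _ => by simpa using ((hasDerivAt_id s).const_sub 1))
    (fun s _ => hv s)
    ((continuous_const).intervalIntegrable 0 1)
    hint2
  have hfund : (∫ s in (0:ℝ)..1, deriv f (a + s * c) * c) = f (a + 1 * c) - f (a + 0 * c) :=
    integral_eq_sub_of_hasDerivAt (fun s _ => hg s) hint1
  have hneg : (∫ s in (0:ℝ)..1, (-1 : ℝ) * (deriv f (a + s * c) * c))
      = -(f (a + 1 * c) - f (a + 0 * c)) := by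
    rw [intervalIntegral.integral_const_mul, hfund]; ring
  have hpull : (∫ s in (0:ℝ)..1, (1 - s) * deriv (deriv f) (a + s * c)) * c ^ 2
      = ∫ s in (0:ℝ)..1, (1 - s) * (deriv (deriv f) (a + s * c) * c * c) := by
    rw [← intervalIntegral.integral_mul_const]
    congr 1; ext s; ring
  rw [hpull, hparts, hneg]
  have hb : a + 1 * c = b := by rw [hc]; ring
  have ha : a + 0 * c = a := by ring
  rw [hb, ha]
  ring

/-- Chain rule from the Leibniz rule: if `D` is a linear operator on an algebra `F` of
real-valued functions satisfying the pointwise Leibniz rule, `w ∈ F` is continuous at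
`x₀`, `f ∈ C²(ℝ)`, and the functions `f ∘ w`, `g₂ ∘ w`, `w - w(x₀)` and
`(g₂ ∘ w)·(w - w(x₀))²` all lie in `F`, then `D(f ∘ w)(x₀) = f'(w(x₀))·(Dw)(x₀)`. -/
theorem chain_rule_from_leibniz (F : Subalgebra ℝ (ℝ → ℝ))
    (D : F →ₗ[ℝ] F)
    (hD : ∀ u v : F, (D (u * v) : ℝ → ℝ) = (D u : ℝ → ℝ) * (v : ℝ → ℝ) + (u : ℝ → ℝ) * (D v : ℝ → ℝ))
    (x₀ : ℝ) (w : ℝ → ℝ) (hwF : w ∈ F) (hw : ContinuousAt w x₀)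
    (f : ℝ → ℝ) (hf : ContDiff ℝ 2 f)
    (hfw : (fun x => f (w x)) ∈ F)
    (hg2w : (fun x => ∫ s in (0:ℝ)..1,
        (1 - s) * deriv (deriv f) (w x₀ + s * (w x - w x₀))) ∈ F)
    (hwc : (fun x => w x - w x₀) ∈ F)
    (hprod : (fun x => (∫ s in (0:ℝ)..1,
        (1 - s) * deriv (deriv f) (w x₀ + s * (w x - w x₀))) * (w x - w x₀) ^ 2) ∈ F) :
    (D ⟨fun x => f (w x), hfw⟩ : ℝ → ℝ) x₀ =
      deriv f (w x₀) * (D ⟨w, hwF⟩ : ℝ → ℝ) x₀ := by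
  set g2e : F := ⟨_, hg2w⟩ with hg2e
  set wce : F := ⟨_, hwc⟩ with hwce
  set pe : F := ⟨_, hprod⟩ with hpe
  set fwe : F := (⟨fun x => f (w x), hfw⟩ : F) with hfwe
  set we : F := (⟨w, hwF⟩ : F) with hwe
  -- D of constants is zero
  have hD1 : (D 1 : ℝ → ℝ) = 0 := by
    funext x
    have h := congrFun (hD 1 1) x
    simp at h
    simpa using h
  -- decomposition
  have hPQ : pe = (g2e * wce) * wce := by
    apply Subtype.ext
    funext x
    simp [hpe, hg2e, hwce]
    ring
  have hdecomp : fwe = (f (w x₀)) • (1 : F) + (deriv f (w x₀)) • wce + pe := by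
    apply Subtype.ext
    funext x
    have h := taylor2_integral f hf (w x₀) (w x)
    simp [hfwe, hwce, hpe]
    linarith
  have hDpe : (D pe : ℝ → ℝ) x₀ = 0 := by
    rw [hPQ]
    have h := congrFun (hD (g2e * wce) wce) x₀
    rw [h]
    simp [hwce]
  have hwce' : wce = we - (w x₀) • (1 : F) := by
    apply Subtype.ext
    funext x
    simp [hwce, hwe]
  have hDw : (D wce : ℝ → ℝ) x₀ = (D we : ℝ → ℝ) x₀ := by
    rw [hwce', map_sub, map_smul]
    simp [hD1]
  calc (D fwe : ℝ → ℝ) x₀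
      = ((f (w x₀)) • (D (1:F) : ℝ → ℝ) + (deriv f (w x₀)) • (D wce : ℝ → ℝ)
          + (D pe : ℝ → ℝ)) x₀ := by
        rw [hdecomp, map_add, map_add, map_smul, map_smul]; rfl
    _ = deriv f (w x₀) * (D we : ℝ → ℝ) x₀ := by
        simp [hD1, hDpe, hDw]
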